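/- Let λᵢ > 0 and h, f₁, …, f_m : ℝⁿ → [0,1] be measurable functions satisfying Φ⁻¹(h(∑ᵢ λᵢxᵢ)) ≥ ∑ᵢ λᵢΦ⁻¹(fᵢ(xᵢ)) for a.e. (x₁,…,x_m), with at least one function a.e. equal to 0 or a.e. equal to 1. Then Φ⁻¹(∫h dγₙ) = ∑ᵢ λᵢΦ⁻¹(∫fᵢ dγₙ) holds if and only if either (h =a.e. 1, some fᵢ =a.e. 1, and no fᵢ =a.e. 0) or (h =a.e. 0 and some fᵢ =a.e. 0). -/

import Mathlib

open MeasureTheory Real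

noncomputable def stdGaussian (n : ℕ) : Measure (EuclideanSpace ℝ (Fin n)) :=
  volume.withDensity fun x =>
    ENNReal.ofReal (Real.exp (-‖x‖ ^ 2 / 2) / (2 * Real.pi) ^ ((n : ℝ) / 2))

noncomputable def Phi (x : ℝ) : ℝ :=
  ∫ y in Set.Iic x, Real.exp (-y ^ 2 / 2) / Real.sqrt (2 * Real.pi)

noncomputable def PhiInv : ℝ → ℝ := Function.invFun Phi

/-- The inverse Gaussian CDF, extended to take the value `⊥` at `0` (and below)
and `⊤` at `1` (and above). -/
noncomputable def PhiInvE (p : ℝ) : EReal :=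
  if p ≤ 0 then ⊥ else if 1 ≤ p then ⊤ else ((PhiInv p : ℝ) : EReal)

section Aux

open Filter

lemma ereal_add_eq_top_iff {x y : EReal} :
    x + y = ⊤ ↔ (x = ⊤ ∧ y ≠ ⊥) ∨ (y = ⊤ ∧ x ≠ ⊥) := by
  induction x using EReal.rec <;> induction y using EReal.rec <;>
    simp [← EReal.coe_add]

lemma ereal_sum_eq_bot {ι : Type*} (s : Finset ι) (a : ι → EReal) :
    (∑ i ∈ s, a i) = ⊥ ↔ ∃ i ∈ s, a i = ⊥ := by
  classical
  induction s using Finset.induction_on with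
  | empty => simp
  | @insert x s hx ih =>
    rw [Finset.sum_insert hx, EReal.add_eq_bot_iff, ih]
    simp [hx]

lemma ereal_sum_eq_top {ι : Type*} (s : Finset ι) (a : ι → EReal) :
    (∑ i ∈ s, a i) = ⊤ ↔ (∃ i ∈ s, a i = ⊤) ∧ ∀ i ∈ s, a i ≠ ⊥ := by
  classical
  induction s using Finset.induction_on with
  | empty => simp
  | @insert x s hx ih =>
    have hb : (∑ i ∈ s, a i) = ⊥ ↔ ∃ i ∈ s, a i = ⊥ := ereal_sum_eq_bot s a
    rw [Finset.sum_insert hx, ereal_add_eq_top_iff, ih]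
    constructor
    · rintro (⟨hxT, hS⟩ | ⟨⟨⟨i, his, hiT⟩, hnb⟩, hxb⟩)
      · have hS' : ∀ i ∈ s, a i ≠ ⊥ := fun i hi hbot => hS (hb.2 ⟨i, hi, hbot⟩)
        exact ⟨⟨x, Finset.mem_insert_self x s, hxT⟩,
          fun i hi => by
            rcases Finset.mem_insert.1 hi with rfl | hi
            · simp [hxT]
            · exact hS' i hi⟩
      · exact ⟨⟨i, Finset.mem_insert_of_mem his, hiT⟩,
          fun j hj => by
            rcases Finset.mem_insert.1 hj with rfl | hj
            · exact hxb
            · exact hnb j hj⟩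
    · rintro ⟨⟨i, hi, hiT⟩, hnb⟩
      rcases Finset.mem_insert.1 hi with rfl | hi
      · exact Or.inl ⟨hiT, fun hbot => by
          obtain ⟨j, hj, hjb⟩ := hb.1 hbot
          exact hnb j (Finset.mem_insert_of_mem hj) hjb⟩
      · exact Or.inr ⟨⟨⟨i, hi, hiT⟩, fun j hj => hnb j (Finset.mem_insert_of_mem hj)⟩,
          hnb x (Finset.mem_insert_self x s)⟩

lemma coe_mul_eq_bot_iff {c : ℝ} (hc : 0 < c) {z : EReal} :
    (c : EReal) * z = ⊥ ↔ z = ⊥ := by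
  induction z using EReal.rec with
  | bot => simp [EReal.coe_mul_bot_of_pos hc]
  | coe z => exact iff_of_false (by rw [← EReal.coe_mul]; exact EReal.coe_ne_bot _) (EReal.coe_ne_bot _)
  | top => simp [EReal.coe_mul_top_of_pos hc]

lemma coe_mul_eq_top_iff {c : ℝ} (hc : 0 < c) {z : EReal} :
    (c : EReal) * z = ⊤ ↔ z = ⊤ := by
  induction z using EReal.rec with
  | bot => simp [EReal.coe_mul_bot_of_pos hc]
  | coe z => exact iff_of_false (by rw [← EReal.coe_mul]; exact EReal.coe_ne_top _) (EReal.coe_ne_top _)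
  | top => simp [EReal.coe_mul_top_of_pos hc]

lemma PhiInvE_eq_bot_iff {p : ℝ} (h0 : 0 ≤ p) : PhiInvE p = ⊥ ↔ p = 0 := by
  unfold PhiInvE
  split_ifs with h1 h2
  · simp [le_antisymm h1 h0]
  · exact iff_of_false (by simp) (by intro hp; exact h1 (le_of_eq hp))
  · exact iff_of_false (EReal.coe_ne_bot _) (fun hp => h1 (le_of_eq hp))

lemma PhiInvE_eq_top_iff {p : ℝ} (h1 : p ≤ 1) : PhiInvE p = ⊤ ↔ p = 1 := by
  unfold PhiInvE
  split_ifs with hp0 hp1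
  · exact iff_of_false (by simp) (fun hp => by rw [hp] at hp0; norm_num at hp0)
  · simp [le_antisymm h1 hp1]
  · exact iff_of_false (EReal.coe_ne_top _) (fun hp => hp1 hp.ge)

lemma gaussDensity_cont (n : ℕ) :
    Continuous fun x : EuclideanSpace ℝ (Fin n) =>
      Real.exp (-‖x‖ ^ 2 / 2) / (2 * Real.pi) ^ ((n : ℝ) / 2) := by
  fun_prop

lemma stdGaussian_ae_iff {n : ℕ} {g : EuclideanSpace ℝ (Fin n) → ℝ} {c : ℝ} :
    g =ᵐ[stdGaussian n] (fun _ => c) ↔ g =ᵐ[volume] (fun _ => c) := by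
  apply MeasureTheory.withDensity_ae_eq
  · exact (ENNReal.measurable_ofReal.comp (gaussDensity_cont n).measurable).aemeasurable
  · refine Eventually.of_forall fun x => ?_
    rw [ne_eq, ENNReal.ofReal_eq_zero, not_le]
    positivity

lemma integrable_gauss (n : ℕ) :
    Integrable (fun x : EuclideanSpace ℝ (Fin n) => Real.exp (-‖x‖ ^ 2 / 2)) volume := by
  have h := (GaussianFourier.integrable_cexp_neg_mul_sq_norm_add
      (V := EuclideanSpace ℝ (Fin n)) (b := (1/2 : ℂ)) (by norm_num) 0 0).re
  refine h.congr (Eventually.of_forall fun x => ?_)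
  show (Complex.exp _).re = _
  rw [show (-(1/2 : ℂ) * (‖x‖:ℂ)^2 + 0 * ((inner ℝ (0 : EuclideanSpace ℝ (Fin n)) x : ℝ) : ℂ))
      = ((-‖x‖^2/2 : ℝ) : ℂ) by push_cast; ring]
  exact Complex.exp_ofReal_re _

lemma integral_gauss (n : ℕ) :
    ∫ x : EuclideanSpace ℝ (Fin n), Real.exp (-‖x‖ ^ 2 / 2) = (2 * Real.pi) ^ ((n : ℝ) / 2) := by
  have h := GaussianFourier.integral_rexp_neg_mul_sq_norm
      (V := EuclideanSpace ℝ (Fin n)) (b := 1/2) (by norm_num)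
  rw [finrank_euclideanSpace_fin] at h
  rw [show ((2:ℝ) * Real.pi) ^ ((n : ℝ) / 2) = (Real.pi / (1/2)) ^ ((n:ℝ) / 2) by
    rw [div_div_eq_mul_div, div_one, mul_comm]]
  rw [← h]
  congr 1 with x
  ring_nf

lemma stdGaussian_univ (n : ℕ) : stdGaussian n Set.univ = 1 := by
  rw [stdGaussian, withDensity_apply _ MeasurableSet.univ, Measure.restrict_univ,
    ← ofReal_integral_eq_lintegral_ofReal ((integrable_gauss n).div_const _)
      (Eventually.of_forall fun x => by positivity),
    integral_div, integral_gauss, div_self (by positivity), ENNReal.ofReal_one]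

instance stdGaussian_prob (n : ℕ) : IsProbabilityMeasure (stdGaussian n) :=
  ⟨stdGaussian_univ n⟩

lemma integrable_of_bdd {n : ℕ} {g : EuclideanSpace ℝ (Fin n) → ℝ}
    (hg : Measurable g) (hg01 : ∀ x, g x ∈ Set.Icc (0 : ℝ) 1) :
    Integrable g (stdGaussian n) := by
  refine (integrable_const (1 : ℝ)).mono' hg.aestronglyMeasurable
    (Eventually.of_forall fun x => ?_)
  rw [Real.norm_eq_abs, abs_of_nonneg (hg01 x).1]
  exact (hg01 x).2

lemma integral_eq_zero_iff' {n : ℕ} {g : EuclideanSpace ℝ (Fin n) → ℝ}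
    (hg : Measurable g) (hg01 : ∀ x, g x ∈ Set.Icc (0 : ℝ) 1) :
    (∫ x, g x ∂stdGaussian n) = 0 ↔ g =ᵐ[volume] (fun _ => (0 : ℝ)) := by
  rw [integral_eq_zero_iff_of_nonneg (fun x => (hg01 x).1) (integrable_of_bdd hg hg01)]
  exact stdGaussian_ae_iff

lemma integral_eq_one_iff' {n : ℕ} {g : EuclideanSpace ℝ (Fin n) → ℝ}
    (hg : Measurable g) (hg01 : ∀ x, g x ∈ Set.Icc (0 : ℝ) 1) :
    (∫ x, g x ∂stdGaussian n) = 1 ↔ g =ᵐ[volume] (fun _ => (1 : ℝ)) := by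
  have h1 : ∀ x : EuclideanSpace ℝ (Fin n), 1 - g x ∈ Set.Icc (0 : ℝ) 1 := fun x =>
    ⟨by linarith [(hg01 x).2], by linarith [(hg01 x).1]⟩
  have key := integral_eq_zero_iff' (g := fun x => 1 - g x) (measurable_const.sub hg) h1
  rw [integral_sub (integrable_const 1) (integrable_of_bdd hg hg01)] at key
  simp only [integral_const, probReal_univ, measure_univ, ENNReal.toReal_one, smul_eq_mul, mul_one] at key
  constructor
  · intro h
    have := key.1 (by rw [h]; ring)
    filter_upwards [this] with x hx
    have hx' : 1 - g x = 0 := hx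
    show g x = 1
    linarith
  · intro h
    have : (fun x => 1 - g x) =ᵐ[volume] (fun _ => (0 : ℝ)) := by
      filter_upwards [h] with x hx
      have hx' : g x = 1 := hx
      show 1 - g x = 0
      linarith
    have := key.2 this
    linarith

lemma integral_mem_Icc {n : ℕ} {g : EuclideanSpace ℝ (Fin n) → ℝ}
    (hg : Measurable g) (hg01 : ∀ x, g x ∈ Set.Icc (0 : ℝ) 1) :
    (∫ x, g x ∂stdGaussian n) ∈ Set.Icc (0 : ℝ) 1 := by
  constructor
  · exact integral_nonneg fun x => (hg01 x).1
  · calc (∫ x, g x ∂stdGaussian n) ≤ ∫ _, (1 : ℝ) ∂stdGaussian n :=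
        integral_mono (integrable_of_bdd hg hg01) (integrable_const 1) fun x => (hg01 x).2
      _ = 1 := by simp

end Aux

theorem stmt_11 (n m : ℕ) (lam : Fin m → ℝ) (hlam : ∀ i, 0 < lam i)
    (h : EuclideanSpace ℝ (Fin n) → ℝ) (f : Fin m → EuclideanSpace ℝ (Fin n) → ℝ)
    (hh : Measurable h) (hf : ∀ i, Measurable (f i))
    (hh01 : ∀ x, h x ∈ Set.Icc (0 : ℝ) 1) (hf01 : ∀ i x, f i x ∈ Set.Icc (0 : ℝ) 1)
    (hineq : ∀ᵐ x : Fin m → EuclideanSpace ℝ (Fin n) ∂(Measure.pi fun _ => volume),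
      (∑ i, ((lam i : ℝ) : EReal) * PhiInvE (f i (x i))) ≤ PhiInvE (h (∑ i, lam i • x i)))
    (htriv : (h =ᵐ[(volume : Measure (EuclideanSpace ℝ (Fin n)))] fun _ => (0 : ℝ)) ∨
      (h =ᵐ[(volume : Measure (EuclideanSpace ℝ (Fin n)))] fun _ => (1 : ℝ)) ∨
      ∃ i, (f i =ᵐ[(volume : Measure (EuclideanSpace ℝ (Fin n)))] fun _ => (0 : ℝ)) ∨
        (f i =ᵐ[(volume : Measure (EuclideanSpace ℝ (Fin n)))] fun _ => (1 : ℝ))) :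
    (PhiInvE (∫ x, h x ∂(stdGaussian n)) =
        ∑ i, ((lam i : ℝ) : EReal) * PhiInvE (∫ x, f i x ∂(stdGaussian n))) ↔
      (((h =ᵐ[(volume : Measure (EuclideanSpace ℝ (Fin n)))] fun _ => (1 : ℝ)) ∧
          (∃ i, f i =ᵐ[(volume : Measure (EuclideanSpace ℝ (Fin n)))] fun _ => (1 : ℝ)) ∧
          (∀ i, ¬ (f i =ᵐ[(volume : Measure (EuclideanSpace ℝ (Fin n)))] fun _ => (0 : ℝ)))) ∨
        ((h =ᵐ[(volume : Measure (EuclideanSpace ℝ (Fin n)))] fun _ => (0 : ℝ)) ∧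
          ∃ i, f i =ᵐ[(volume : Measure (EuclideanSpace ℝ (Fin n)))] fun _ => (0 : ℝ))) := by
  classical
  set Ih : ℝ := ∫ x, h x ∂(stdGaussian n) with hIh
  set I : Fin m → ℝ := fun i => ∫ x, f i x ∂(stdGaussian n) with hI
  have hIh01 := integral_mem_Icc hh hh01
  have hI01 : ∀ i, I i ∈ Set.Icc (0 : ℝ) 1 := fun i => integral_mem_Icc (hf i) (hf01 i)
  -- characterizations of terms
  have hBh : PhiInvE Ih = ⊥ ↔ h =ᵐ[volume] (fun _ => (0 : ℝ)) := by
    rw [PhiInvE_eq_bot_iff hIh01.1]; exact integral_eq_zero_iff' hh hh01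
  have hTh : PhiInvE Ih = ⊤ ↔ h =ᵐ[volume] (fun _ => (1 : ℝ)) := by
    rw [PhiInvE_eq_top_iff hIh01.2]; exact integral_eq_one_iff' hh hh01
  have hBf : ∀ i, ((lam i : ℝ) : EReal) * PhiInvE (I i) = ⊥ ↔
      f i =ᵐ[volume] (fun _ => (0 : ℝ)) := fun i => by
    rw [coe_mul_eq_bot_iff (hlam i), PhiInvE_eq_bot_iff (hI01 i).1]
    exact integral_eq_zero_iff' (hf i) (hf01 i)
  have hTf : ∀ i, ((lam i : ℝ) : EReal) * PhiInvE (I i) = ⊤ ↔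
      f i =ᵐ[volume] (fun _ => (1 : ℝ)) := fun i => by
    rw [coe_mul_eq_top_iff (hlam i), PhiInvE_eq_top_iff (hI01 i).2]
    exact integral_eq_one_iff' (hf i) (hf01 i)
  have hSb : (∑ i, ((lam i : ℝ) : EReal) * PhiInvE (I i)) = ⊥ ↔
      ∃ i, f i =ᵐ[volume] (fun _ => (0 : ℝ)) := by
    rw [ereal_sum_eq_bot]
    simp only [Finset.mem_univ, true_and]
    exact exists_congr fun i => hBf i
  have hSt : (∑ i, ((lam i : ℝ) : EReal) * PhiInvE (I i)) = ⊤ ↔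
      ((∃ i, f i =ᵐ[volume] (fun _ => (1 : ℝ))) ∧
        ∀ i, ¬ f i =ᵐ[volume] (fun _ => (0 : ℝ))) := by
    rw [ereal_sum_eq_top]
    simp only [Finset.mem_univ, true_and, true_implies, ne_eq]
    exact and_congr (exists_congr fun i => hTf i)
      (forall_congr' fun i => by rw [hBf i])
  constructor
  · intro heq
    rcases htriv with h0 | h1 | ⟨i, hi0 | hi1⟩
    · -- h = 0 a.e.
      have : PhiInvE Ih = ⊥ := hBh.2 h0
      exact Or.inr ⟨h0, hSb.1 (heq ▸ this)⟩
    · -- h = 1 a.e.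
      have : PhiInvE Ih = ⊤ := hTh.2 h1
      obtain ⟨he, hne⟩ := hSt.1 (heq ▸ this)
      exact Or.inl ⟨h1, he, hne⟩
    · -- some f i = 0 a.e.
      have : (∑ j, ((lam j : ℝ) : EReal) * PhiInvE (I j)) = ⊥ := hSb.2 ⟨i, hi0⟩
      exact Or.inr ⟨hBh.1 (heq.trans this), i, hi0⟩
    · -- some f i = 1 a.e.
      by_cases hz : ∃ j, f j =ᵐ[volume] (fun _ => (0 : ℝ))
      · have : (∑ j, ((lam j : ℝ) : EReal) * PhiInvE (I j)) = ⊥ := hSb.2 hz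
        exact Or.inr ⟨hBh.1 (heq.trans this), hz⟩
      · push_neg at hz
        have : (∑ j, ((lam j : ℝ) : EReal) * PhiInvE (I j)) = ⊤ := hSt.2 ⟨⟨i, hi1⟩, hz⟩
        exact Or.inl ⟨hTh.1 (heq.trans this), ⟨i, hi1⟩, hz⟩
  · rintro (⟨h1, he, hne⟩ | ⟨h0, hz⟩)
    · rw [hTh.2 h1, (hSt.2 ⟨he, hne⟩).symm]
    · rw [hBh.2 h0, (hSb.2 hz).symm]
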